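/- Consider any two-factor biometric system on a finite probability space: random variables B (probe), K (key), S (stored data) taking values in finite sets, and a decision function g with g(d,l,s) ∈ {0,1}. Define the false rejection rate P_FR := Pr[g(B,K,S) = 0] and the set of attackable stored values S_a := { s : ∃ d, l with g(d,l,s) = 1 }. Then Pr[S ∈ S_a] ≥ 1 − P_FR; consequently the successful attack rate of an adversary who observes S satisfies P_SA(S) ≥ 1 − P_FR. Moreover, if S_a contains every possible value of S, then P_SA(S) = 1. -/
import Mathlib


open Classical in
/-- Probability of the event `P` under the probability mass function `μ` on the finite
sample space `Ω`. -/
noncomputable def prMass {Ω : Type*} [Fintype Ω] (μ : Ω → ℝ) (P : Ω → Prop) : ℝ :=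
  ∑ ω : Ω, if P ω then μ ω else 0

open Classical in
lemma prMass_mono {Ω : Type*} [Fintype Ω] (μ : Ω → ℝ) (hμ0 : ∀ ω, 0 ≤ μ ω)
    {P Q : Ω → Prop} (h : ∀ ω, P ω → Q ω) : prMass μ P ≤ prMass μ Q := by
  apply Finset.sum_le_sum
  intro ω _
  by_cases hp : P ω
  · simp [hp, h ω hp]
  · simp only [hp, if_false]
    split <;> simp [hμ0 ω]

open Classical in
lemma prMass_compl {Ω : Type*} [Fintype Ω] (μ : Ω → ℝ) (hμ1 : ∑ ω : Ω, μ ω = 1)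
    (P : Ω → Prop) : prMass μ P = 1 - prMass μ (fun ω => ¬ P ω) := by
  unfold prMass
  rw [← hμ1, ← Finset.sum_sub_distrib]
  apply Finset.sum_congr rfl
  intro ω _
  by_cases hp : P ω <;> simp [hp]

open Classical in
/-- Theorem 2 of the paper.  For any two-factor biometric system on a finite
probability space, with probe `B`, key `K`, stored data `S` and decision function `g`,
letting `P_FR = Pr[g(B,K,S) = 0]` and `S_a = {s : ∃ d l, g(d,l,s) = 1}`:
`Pr[S ∈ S_a] ≥ 1 - P_FR`; consequently some attack strategy (a function of the observed
value of `S`) succeeds with probability at least `1 - P_FR`, i.e. `P_SA(S) ≥ 1 - P_FR`.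
Moreover, if every value of `S` lies in `S_a`, then some attack strategy succeeds with
probability one, i.e. `P_SA(S) = 1`. -/
theorem stmt_6 {Ω D L S : Type*} [Fintype Ω] [Nonempty D] [Nonempty L]
    (μ : Ω → ℝ) (hμ0 : ∀ ω, 0 ≤ μ ω) (hμ1 : ∑ ω : Ω, μ ω = 1)
    (B : Ω → D) (K : Ω → L) (St : Ω → S)
    (g : D → L → S → Bool) :
    (prMass μ (fun ω => ∃ d l, g d l (St ω) = true)
        ≥ 1 - prMass μ (fun ω => g (B ω) (K ω) (St ω) = false))
    ∧ (∃ att : S → D × L,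
        prMass μ (fun ω => g (att (St ω)).1 (att (St ω)).2 (St ω) = true)
          ≥ 1 - prMass μ (fun ω => g (B ω) (K ω) (St ω) = false))
    ∧ ((∀ s : S, ∃ d l, g d l s = true) →
        ∃ att : S → D × L,
          prMass μ (fun ω => g (att (St ω)).1 (att (St ω)).2 (St ω) = true) = 1) := by
  classical
  -- the attack strategy
  set att : S → D × L := fun s =>
    if h : ∃ d l, g d l s = true then (h.choose, h.choose_spec.choose)
    else (Classical.arbitrary D, Classical.arbitrary L) with hatt
  have hatt_spec : ∀ s, (∃ d l, g d l s = true) →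
      g (att s).1 (att s).2 s = true := by
    intro s hs
    simp only [hatt, dif_pos hs]
    exact hs.choose_spec.choose_spec
  have key : 1 - prMass μ (fun ω => g (B ω) (K ω) (St ω) = false)
      = prMass μ (fun ω => g (B ω) (K ω) (St ω) = true) := by
    rw [prMass_compl μ hμ1 (fun ω => g (B ω) (K ω) (St ω) = true)]
    congr 1
    apply Finset.sum_congr rfl
    intro ω _
    by_cases h : g (B ω) (K ω) (St ω) = true <;> simp [h]
  have h1 : prMass μ (fun ω => ∃ d l, g d l (St ω) = true)
      ≥ 1 - prMass μ (fun ω => g (B ω) (K ω) (St ω) = false) := by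
    rw [key]
    exact prMass_mono μ hμ0 (fun ω h => ⟨B ω, K ω, h⟩)
  have h2 : prMass μ (fun ω => g (att (St ω)).1 (att (St ω)).2 (St ω) = true)
      ≥ prMass μ (fun ω => ∃ d l, g d l (St ω) = true) :=
    prMass_mono μ hμ0 (fun ω h => hatt_spec _ h)
  refine ⟨h1, ⟨att, le_trans h1 h2⟩, fun hall => ⟨att, ?_⟩⟩
  have : ∀ ω, g (att (St ω)).1 (att (St ω)).2 (St ω) = true :=
    fun ω => hatt_spec _ (hall (St ω))
  unfold prMass
  rw [← hμ1]
  exact Finset.sum_congr rfl fun ω _ => by simp [this ω]
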